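/- arXiv:2306.10282 — 4 statements merged into one kernel-verified Lean document; each statement's English description precedes it below -/
import Mathlib

section
/- Let d > 1 be a square-free positive integer, and p < 0, q ∈ ℚ with q ≠ 0 such that d' := p² − q²d > 0. If d' ∈ d·(ℚ^×)² (i.e. d'/d is a nonzero rational square), then the field K = ℚ(√(p + q√d)) has degree 4 over ℚ, is Galois over ℚ, and contains ℚ(√d). -/
open IntermediateField

open Polynomial

theorem stmt6 (d : ℕ) (hd : 1 < d) (hsf : Squarefree d) (p q : ℚ) (hp : p < 0) (hq : q ≠ 0)
    (hd' : 0 < p ^ 2 - q ^ 2 * d)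
    (hsq : ∃ r : ℚ, r ≠ 0 ∧ p ^ 2 - q ^ 2 * d = d * r ^ 2)
    (ξp : ℂ) (hξp : ξp ^ 2 = (p : ℂ) + (q : ℂ) * (Real.sqrt d : ℂ)) (him : ξp.re = 0) :
    Module.finrank ℚ (ℚ⟮ξp⟯ : IntermediateField ℚ ℂ) = 4 ∧
    IsGalois ℚ (ℚ⟮ξp⟯ : IntermediateField ℚ ℂ) ∧
    ((Real.sqrt d : ℂ) ∈ (ℚ⟮ξp⟯ : IntermediateField ℚ ℂ)) := by
  obtain ⟨r, hr, hrsq⟩ := hsq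
  have hd0 : (0:ℝ) < (d:ℝ) := by exact_mod_cast Nat.lt_of_lt_of_le Nat.zero_lt_one hd.le
  set s : ℝ := Real.sqrt d with hs_def
  have hs2 : s ^ 2 = (d:ℝ) := Real.sq_sqrt hd0.le
  have hs2c : (s:ℂ) ^ 2 = (d:ℂ) := by
    rw [← Complex.ofReal_pow, hs2]; norm_cast
  -- irrationality of s
  have hirr : Irrational s := by
    rw [hs_def]
    refine irrational_sqrt_natCast_iff.2 ?_
    rintro ⟨m, hm⟩
    have : IsUnit m := hsf m (by rw [hm])
    rw [Nat.isUnit_iff] at this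
    rw [this] at hm
    omega
  -- real quantities
  have hdR : (0:ℝ) < (p:ℝ)^2 - (q:ℝ)^2 * d := by exact_mod_cast hd'
  have haR : (p:ℝ) + q * s ≠ 0 := by
    intro h
    have h2 : (q:ℝ)^2 * (d:ℝ) = (p:ℝ)^2 := by
      rw [← hs2]; linear_combination ((q:ℝ)*s - p) * h
    nlinarith
  have haC : (p:ℂ) + q * s ≠ 0 := by
    intro h
    apply haR
    have : (((p:ℝ) + q*s : ℝ) : ℂ) = 0 := by push_cast; push_cast at h; linear_combination h
    exact_mod_cast this
  have hξ0 : ξp ≠ 0 := by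
    intro h
    apply haC
    rw [← hξp, h]; ring
  -- the quartic polynomial
  set g : ℚ[X] := X^4 - C (2*p) * X^2 + C (p^2 - q^2*d) with hg_def
  have hgm : g.Monic := by
    unfold g; monicity!
  have hgd : g.natDegree = 4 := by
    unfold g; compute_degree!
  have haev : Polynomial.aeval ξp g = 0 := by
    rw [hg_def]
    simp only [map_add, map_sub, map_mul, map_pow, aeval_X, aeval_C, eq_ratCast]
    push_cast
    linear_combination (ξp^2 - (p:ℂ) + (q:ℂ)*s) * hξp + (q:ℂ)^2 * hs2c
  have hint : IsIntegral ℚ ξp := ⟨g, hgm, by rwa [← Polynomial.aeval_def]⟩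
  haveI : FiniteDimensional ℚ (ℚ⟮ξp⟯ : IntermediateField ℚ ℂ) :=
    IntermediateField.adjoin.finiteDimensional hint
  -- s ∈ K
  have hsK : (s:ℂ) ∈ (ℚ⟮ξp⟯ : IntermediateField ℚ ℂ) := by
    have hxm : ξp ∈ (ℚ⟮ξp⟯ : IntermediateField ℚ ℂ) := mem_adjoin_simple_self ℚ ξp
    have hqC : (q:ℂ) ≠ 0 := by exact_mod_cast hq
    have : (s:ℂ) = ((q:ℚ):ℂ)⁻¹ * (ξp^2 - ((p:ℚ):ℂ)) := by
      rw [hξp]; field_simp; ring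
    rw [this]
    exact mul_mem (inv_mem (SubfieldClass.ratCast_mem _ q))
      (sub_mem (pow_mem hxm 2) (SubfieldClass.ratCast_mem _ p))
  -- minpoly of s over ℚ has degree 2
  have hsint : IsIntegral ℚ ((s:ℝ):ℂ) :=
    ⟨X^2 - C (d:ℚ), by monicity!, by
      simp only [Polynomial.eval₂_sub, Polynomial.eval₂_pow, Polynomial.eval₂_X,
        Polynomial.eval₂_C]
      rw [hs2c]; push_cast; ring⟩
  have hms2 : (minpoly ℚ ((s:ℝ):ℂ)).natDegree = 2 := by
    have hdvd : minpoly ℚ ((s:ℝ):ℂ) ∣ X^2 - C (d:ℚ) := by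
      apply minpoly.dvd
      simp only [map_sub, map_pow, aeval_X, aeval_C]
      rw [hs2c]; push_cast; ring
    have hne : (X^2 - C (d:ℚ) : ℚ[X]) ≠ 0 :=
      Polynomial.X_pow_sub_C_ne_zero (by norm_num) _
    have hle : (minpoly ℚ ((s:ℝ):ℂ)).natDegree ≤ 2 := by
      have := Polynomial.natDegree_le_of_dvd hdvd hne
      rwa [Polynomial.natDegree_X_pow_sub_C] at this
    have hge : 2 ≤ (minpoly ℚ ((s:ℝ):ℂ)).natDegree := by
      rw [minpoly.two_le_natDegree_iff hsint]
      rintro ⟨y, hy⟩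
      apply hirr
      refine ⟨y, ?_⟩
      have : ((y:ℝ):ℂ) = ((s:ℝ):ℂ) := by rw [← hy]; simp
      exact_mod_cast this
    omega
  -- 2 ∣ finrank
  have hdvd2 : 2 ∣ Module.finrank ℚ (ℚ⟮ξp⟯ : IntermediateField ℚ ℂ) := by
    set sK : (ℚ⟮ξp⟯ : IntermediateField ℚ ℂ) := ⟨(s:ℂ), hsK⟩ with hsK_def
    have hint' : IsIntegral ℚ sK := IsIntegral.of_finite ℚ sK
    have hmeq : minpoly ℚ sK = minpoly ℚ ((s:ℝ):ℂ) := by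
      have := minpoly.algebraMap_eq (A := ℚ)
        (algebraMap (ℚ⟮ξp⟯ : IntermediateField ℚ ℂ) ℂ).injective sK
      rw [← this]; rfl
    have := minpoly.degree_dvd hint'
    rwa [hmeq, hms2] at this
  have hfr : Module.finrank ℚ (ℚ⟮ξp⟯ : IntermediateField ℚ ℂ)
      = (minpoly ℚ ξp).natDegree := IntermediateField.adjoin.finrank hint
  have hmdvd : minpoly ℚ ξp ∣ g := minpoly.dvd ℚ ξp haev
  have hle4 : (minpoly ℚ ξp).natDegree ≤ 4 := by
    have := Polynomial.natDegree_le_of_dvd hmdvd hgm.ne_zero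
    omega
  -- finrank ≠ 2
  have hne2 : (minpoly ℚ ξp).natDegree ≠ 2 := by
    intro h2
    have hfr2 : Module.finrank ℚ (ℚ⟮ξp⟯ : IntermediateField ℚ ℂ) = 2 := by rw [hfr, h2]
    have hfrs : Module.finrank ℚ (ℚ⟮((s:ℝ):ℂ)⟯ : IntermediateField ℚ ℂ) = 2 := by
      rw [IntermediateField.adjoin.finrank hsint, hms2]
    have hle : (ℚ⟮((s:ℝ):ℂ)⟯ : IntermediateField ℚ ℂ) ≤ ℚ⟮ξp⟯ := by
      rw [adjoin_simple_le_iff]; exact hsK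
    have heq : (ℚ⟮((s:ℝ):ℂ)⟯ : IntermediateField ℚ ℂ) = ℚ⟮ξp⟯ :=
      IntermediateField.eq_of_le_of_finrank_le hle (by rw [hfr2, hfrs])
    -- real intermediate field
    set RIF : IntermediateField ℚ ℂ :=
      Subfield.toIntermediateField Complex.ofRealHom.fieldRange
        (fun x => ⟨(x:ℝ), by simp⟩) with hRIF
    have hsR : (ℚ⟮((s:ℝ):ℂ)⟯ : IntermediateField ℚ ℂ) ≤ RIF := by
      rw [adjoin_simple_le_iff]
      exact ⟨s, rfl⟩
    have hxR : ξp ∈ RIF := by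
      rw [heq] at hsR
      exact hsR (mem_adjoin_simple_self ℚ ξp)
    obtain ⟨t, ht⟩ := hxR
    apply hξ0
    have him2 : ξp.im = 0 := by rw [← ht]; rfl
    exact Complex.ext him him2
  have hdeg4 : (minpoly ℚ ξp).natDegree = 4 := by
    rw [hfr] at hdvd2
    have h1 : 1 ≤ (minpoly ℚ ξp).natDegree := minpoly.natDegree_pos hint
    omega
  have hfin4 : Module.finrank ℚ (ℚ⟮ξp⟯ : IntermediateField ℚ ℂ) = 4 := by rw [hfr, hdeg4]
  -- minpoly = g
  have hmg : minpoly ℚ ξp = g :=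
    (Polynomial.eq_of_monic_of_dvd_of_natDegree_le (minpoly.monic hint) hgm hmdvd
      (by rw [hgd, hdeg4])).symm
  -- all roots lie in K
  set η : ℂ := (r:ℂ) * s * ξp⁻¹ with hη_def
  have hrsqC : (p:ℂ)^2 - (q:ℂ)^2*(d:ℂ) = (d:ℂ)*(r:ℂ)^2 := by exact_mod_cast hrsq
  have hη2 : η^2 = (p:ℂ) - q*s := by
    rw [hη_def]
    field_simp
    rw [hξp]
    linear_combination ((r:ℂ)^2 + (q:ℂ)^2) * hs2c - hrsqC
  have hηK : η ∈ (ℚ⟮ξp⟯ : IntermediateField ℚ ℂ) := by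
    exact mul_mem (mul_mem (SubfieldClass.ratCast_mem _ r) hsK)
      (inv_mem (mem_adjoin_simple_self ℚ ξp))
  have hroots : ∀ z ∈ (minpoly ℚ ξp).rootSet ℂ, z ∈ (ℚ⟮ξp⟯ : IntermediateField ℚ ℂ) := by
    intro z hz
    rw [Polynomial.mem_rootSet, hmg, hg_def] at hz
    obtain ⟨-, hz⟩ := hz
    simp only [map_add, map_sub, map_mul, map_pow, aeval_X, aeval_C, eq_ratCast] at hz
    push_cast at hz
    have hfac : (z^2 - ξp^2) * (z^2 - η^2) = 0 := by
      rw [hξp, hη2]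
      linear_combination hz - (q:ℂ)^2 * hs2c
    rcases mul_eq_zero.1 hfac with h | h
    · rcases mul_eq_zero.1 (show (z - ξp)*(z + ξp) = 0 by linear_combination h) with h' | h'
      · rw [sub_eq_zero] at h'; rw [h']; exact mem_adjoin_simple_self ℚ ξp
      · rw [add_eq_zero_iff_eq_neg] at h'; rw [h']
        exact neg_mem (mem_adjoin_simple_self ℚ ξp)
    · rcases mul_eq_zero.1 (show (z - η)*(z + η) = 0 by linear_combination h) with h' | h'
      · rw [sub_eq_zero] at h'; rw [h']; exact hηK
      · rw [add_eq_zero_iff_eq_neg] at h'; rw [h']; exact neg_mem hηK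
  -- Galois
  have hsep : (minpoly ℚ ξp).Separable := (minpoly.irreducible hint).separable
  have hsplits : ((minpoly ℚ ξp).map (algebraMap ℚ ℂ)).Splits := IsAlgClosed.splits _
  haveI hSF : ((minpoly ℚ ξp).IsSplittingField ℚ
      (IntermediateField.adjoin ℚ ((minpoly ℚ ξp).rootSet ℂ))) :=
    IntermediateField.adjoin_rootSet_isSplittingField hsplits
  have hE : IntermediateField.adjoin ℚ ((minpoly ℚ ξp).rootSet ℂ) = ℚ⟮ξp⟯ := by
    refine le_antisymm (IntermediateField.adjoin_le_iff.2 hroots) ?_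
    rw [adjoin_simple_le_iff]
    exact IntermediateField.subset_adjoin ℚ _
      (Polynomial.mem_rootSet.2 ⟨minpoly.ne_zero hint, minpoly.aeval ℚ ξp⟩)
  have hgal : IsGalois ℚ (IntermediateField.adjoin ℚ ((minpoly ℚ ξp).rootSet ℂ)) :=
    IsGalois.of_separable_splitting_field hsep
  rw [hE] at hgal
  exact ⟨hfin4, hgal, hsK⟩
end

section
/- Let V be an n-dimensional vector space over a field k, and let δ¹, …, δⁿ and ε¹, …, εⁿ be vectors in V such that the n vectors δ¹ − ε¹, …, δⁿ − εⁿ form a basis of V. Then there exists a subset I ⊆ {1,…,n} such that the collection {δ^i : i ∈ I} ∪ {ε^j : j ∉ I} is linearly independent (hence a basis of V). -/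
open Submodule

lemma replace_span {k V : Type*} [Field k] [AddCommGroup V] [Module k V] {n : ℕ}
    (b : Module.Basis (Fin n) k V) (j : Fin n) (v : V) (h : b.repr v j ≠ 0) :
    Submodule.span k (Set.range (fun i => if i = j then v else b i)) = ⊤ := by
  set S := Set.range (fun i => if i = j then v else b i) with hS
  apply top_unique
  rw [← b.span_eq]
  rw [Submodule.span_le]
  rintro x ⟨i, rfl⟩
  by_cases hij : i = j
  · subst hij
    have hv : v = ∑ l, b.repr v l • b l := (b.sum_repr v).symm
    have hmem : v ∈ span k S := subset_span ⟨i, by simp⟩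
    have hrest : ∀ l ≠ i, b l ∈ span k S := fun l hl =>
      subset_span ⟨l, by simp [hl]⟩
    have : (b.repr v i) • b i ∈ span k S := by
      have : (b.repr v i) • b i = v - ∑ l ∈ Finset.univ.erase i, b.repr v l • b l := by
        rw [Finset.sum_erase_eq_sub (Finset.mem_univ i), ← hv, sub_sub_cancel]
      rw [this]
      exact sub_mem hmem (Submodule.sum_mem _ fun l hl =>
        Submodule.smul_mem _ _ (hrest l (Finset.ne_of_mem_erase hl)))
    have := Submodule.smul_mem _ (b.repr v i)⁻¹ this
    rwa [smul_smul, inv_mul_cancel₀ h, one_smul] at this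
  · exact subset_span ⟨i, by simp [hij]⟩

theorem stmt9 (k V : Type*) [Field k] [AddCommGroup V] [Module k V] (n : ℕ)
    (δ ε : Fin n → V)
    (hli : LinearIndependent k (fun i => δ i - ε i))
    (hspan : Submodule.span k (Set.range fun i => δ i - ε i) = ⊤) :
    ∃ I : Finset (Fin n),
      LinearIndependent k (fun i : Fin n => if i ∈ I then δ i else ε i) ∧
      Submodule.span k (Set.range fun i : Fin n => if i ∈ I then δ i else ε i) = ⊤ := by
  classical
  set b0 : Module.Basis (Fin n) k V := Module.Basis.mk hli (by rw [hspan])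
  have hfin : Module.finrank k V = n := by
    rw [Module.finrank_eq_card_basis b0, Fintype.card_fin]
  have key : ∀ s : Finset (Fin n), ∃ I : Finset (Fin n), I ⊆ s ∧
      Submodule.span k (Set.range fun i : Fin n =>
        if i ∈ I then δ i else if i ∈ s then ε i else δ i - ε i) = ⊤ := by
    intro s
    induction s using Finset.induction with
    | empty => exact ⟨∅, Finset.Subset.refl _, by simpa using hspan⟩
    | @insert a s ha ih =>
      obtain ⟨I, hIs, hsp⟩ := ih
      have haI : a ∉ I := fun h => ha (hIs h)
      set g : Fin n → V := fun i => if i ∈ I then δ i else if i ∈ s then ε i else δ i - ε i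
        with hg
      have card_eq : Fintype.card (Fin n) = Module.finrank k V := by
        rw [Fintype.card_fin, hfin]
      set b : Module.Basis (Fin n) k V := basisOfTopLeSpanOfCardEqFinrank g (le_of_eq hsp.symm) card_eq
        with hb
      have hbg : ⇑b = g := coe_basisOfTopLeSpanOfCardEqFinrank g _ _
      have hba : b a = δ a - ε a := by
        rw [hbg, hg]; simp [haI, ha]
      have hdiff : b.repr (δ a) a - b.repr (ε a) a = 1 := by
        have : b.repr (δ a - ε a) a = 1 := by
          rw [← hba, b.repr_self, Finsupp.single_eq_same]
        rwa [map_sub, Finsupp.sub_apply] at this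
      by_cases hc : b.repr (δ a) a ≠ 0
      · refine ⟨insert a I, Finset.insert_subset_insert a hIs, ?_⟩
        have heq : (fun i : Fin n => if i ∈ insert a I then δ i
            else if i ∈ insert a s then ε i else δ i - ε i) =
            fun i => if i = a then δ a else b i := by
          funext i
          by_cases hia : i = a
          · subst hia; simp
          · simp only [Finset.mem_insert, hia, false_or, if_neg hia, hbg, hg, if_false]
        rw [heq]
        exact replace_span b a (δ a) hc
      · push_neg at hc
        have hd : b.repr (ε a) a ≠ 0 := by
          intro h; rw [hc, h] at hdiff; simp at hdiff
        refine ⟨I, hIs.trans (Finset.subset_insert a s), ?_⟩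
        have heq : (fun i : Fin n => if i ∈ I then δ i
            else if i ∈ insert a s then ε i else δ i - ε i) =
            fun i => if i = a then ε a else b i := by
          funext i
          by_cases hia : i = a
          · subst hia; simp [haI]
          · simp only [Finset.mem_insert, hia, false_or, if_neg hia, hbg, hg, if_false]
        rw [heq]
        exact replace_span b a (ε a) hd
  obtain ⟨I, -, hsp⟩ := key Finset.univ
  simp only [Finset.mem_univ, if_true] at hsp
  refine ⟨I, ?_, hsp⟩
  exact linearIndependent_of_top_le_span_of_card_eq_finrank (le_of_eq hsp.symm)
    (by rw [Fintype.card_fin, hfin])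
end

section
/- Let d > 1 be a square-free positive integer and p < 0, q ∈ ℚ with q ≠ 0, d' := p² − q²d > 0, and d' ∈ d·(ℚ^×)². Let ξ₊ := √(p+q√d) (purely imaginary) and K := ℚ(√d, ξ₊). Then there is an element σ₀ ∈ Gal(K/ℚ) of order 4 with σ₀(√d) = −√d, and σ₀² acts on K ⊂ ℂ as complex conjugation. -/
open IntermediateField Polynomial

set_option maxHeartbeats 1000000
set_option synthInstance.maxHeartbeats 400000

theorem stmt13 (d : ℕ) (hd : 1 < d) (hsf : Squarefree d) (p q : ℚ) (hp : p < 0) (hq : q ≠ 0)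
    (hd' : 0 < p ^ 2 - q ^ 2 * d)
    (hsq : ∃ r : ℚ, r ≠ 0 ∧ p ^ 2 - q ^ 2 * d = d * r ^ 2)
    (ξp : ℂ) (hξp : ξp ^ 2 = (p : ℂ) + (q : ℂ) * (Real.sqrt d : ℂ)) (him : ξp.re = 0)
    (hmem : (Real.sqrt d : ℂ) ∈ (ℚ⟮(Real.sqrt d : ℂ), ξp⟯ : IntermediateField ℚ ℂ)) :
    ∃ σ₀ : (ℚ⟮(Real.sqrt d : ℂ), ξp⟯ : IntermediateField ℚ ℂ) ≃ₐ[ℚ]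
        (ℚ⟮(Real.sqrt d : ℂ), ξp⟯ : IntermediateField ℚ ℂ),
      orderOf σ₀ = 4 ∧
      (σ₀ ⟨(Real.sqrt d : ℂ), hmem⟩ : ℂ) = -(Real.sqrt d : ℂ) ∧
      ∀ x : (ℚ⟮(Real.sqrt d : ℂ), ξp⟯ : IntermediateField ℚ ℂ),
        (σ₀ (σ₀ x) : ℂ) = (starRingEnd ℂ) (x : ℂ) := by
  obtain ⟨r, hr0, hrd⟩ := hsq
  have hd0 : (0:ℝ) ≤ (d:ℝ) := by positivity
  set sR : ℝ := Real.sqrt d with hsRdef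
  set sC : ℂ := (sR : ℂ) with hsCdef
  have halg : ∀ a : ℚ, algebraMap ℚ ℂ a = (a:ℂ) := fun a => by norm_cast
  have hsR2 : sR ^ 2 = (d:ℝ) := Real.sq_sqrt hd0
  have hs2 : sC ^ 2 = (d:ℂ) := by
    rw [hsCdef, ← Complex.ofReal_pow, hsR2]; push_cast; ring
  have hrdC : (p:ℂ)^2 - (q:ℂ)^2 * (d:ℂ) = (d:ℂ) * (r:ℂ)^2 := by exact_mod_cast hrd
  -- irrationality of sR
  have hirr : Irrational sR := by
    rw [hsRdef]
    refine irrational_sqrt_natCast_iff.2 (fun ⟨k, hk⟩ => ?_)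
    have h1 : IsUnit k := hsf k (by rw [hk])
    rw [Nat.isUnit_iff] at h1
    rw [h1] at hk
    omega
  have hsnot : ∀ a : ℚ, ((a:ℝ)) ≠ sR := fun a h => hirr ⟨a, h⟩
  have hpqs : (p:ℝ) + q * sR ≠ 0 := by
    intro h
    have h3 : ((q:ℝ)*sR)^2 = ((p:ℝ))^2 := by
      rw [show (q:ℝ)*sR = -(p:ℝ) by linarith]; ring
    have h2 : (p:ℝ)^2 - (q:ℝ)^2 * (d:ℝ) = 0 := by
      rw [← hsR2]; linear_combination -h3
    have : p^2 - q^2*(d:ℚ) = 0 := by exact_mod_cast h2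
    exact absurd this (ne_of_gt hd')
  have hbase : (p:ℂ) + (q:ℂ) * sC ≠ 0 := by
    rw [hsCdef]
    intro h
    apply hpqs
    exact_mod_cast congrArg Complex.re h
  have hξ0 : ξp ≠ 0 := by
    intro h
    apply hbase
    rw [← hξp, h]; ring
  have hconjξ : (starRingEnd ℂ) ξp = -ξp := by
    apply Complex.ext <;> simp [him]
  have hsR0 : sR ≠ 0 := by
    have : 0 < sR := Real.sqrt_pos.2 (by positivity)
    linarith
  have hs0 : sC ≠ 0 := by rwa [hsCdef, ne_eq, Complex.ofReal_eq_zero]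
  have hrC0 : (r:ℂ) ≠ 0 := by exact_mod_cast hr0
  have hqC0 : (q:ℂ) ≠ 0 := by exact_mod_cast hq
  -- the conjugate root
  set ξm : ℂ := sC * r / ξp with hξmdef
  have hξm0 : ξm ≠ 0 := div_ne_zero (mul_ne_zero hs0 hrC0) hξ0
  have hξm2 : ξm ^ 2 = (p:ℂ) - (q:ℂ) * sC := by
    rw [hξmdef, div_pow, hξp, div_eq_iff hbase]
    linear_combination ((r:ℂ)^2 + (q:ℂ)^2) * hs2 - hrdC
  have hξmξp : ξm * ξp = sC * r := div_mul_cancel₀ _ hξ0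
  -- sC lies in ℚ⟮ξp⟯
  have hsmem' : sC ∈ ℚ⟮ξp⟯ := by
    have hrepr : sC = (algebraMap ℚ ℂ q)⁻¹ * (ξp ^ 2 - algebraMap ℚ ℂ p) := by
      rw [hξp]
      simp only [halg]
      field_simp
      ring
    rw [hrepr]
    exact mul_mem (inv_mem (IntermediateField.algebraMap_mem _ q))
      (sub_mem (pow_mem (mem_adjoin_simple_self ℚ ξp) 2) (IntermediateField.algebraMap_mem _ p))
  have hK : (ℚ⟮sC, ξp⟯ : IntermediateField ℚ ℂ) = ℚ⟮ξp⟯ := by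
    apply le_antisymm
    · rw [adjoin_le_iff]
      rw [Set.insert_subset_iff]
      exact ⟨hsmem', Set.singleton_subset_iff.2 (mem_adjoin_simple_self ℚ ξp)⟩
    · rw [adjoin_le_iff]
      exact Set.singleton_subset_iff.2 (subset_adjoin ℚ _ (by simp))
  -- elements of ℚ⟮sC⟯ are real
  have hLreal : ∀ z ∈ (ℚ⟮sC⟯ : IntermediateField ℚ ℂ), z.im = 0 := by
    have hle : (ℚ⟮sC⟯ : IntermediateField ℚ ℂ) ≤
        (Complex.ofRealAm.restrictScalars ℚ).fieldRange := by
      rw [adjoin_le_iff]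
      exact Set.singleton_subset_iff.2 ⟨sR, rfl⟩
    intro z hz
    obtain ⟨y, hy⟩ := hle hz
    rw [← hy]
    exact Complex.ofReal_im y
  have hξnL : ξp ∉ (ℚ⟮sC⟯ : IntermediateField ℚ ℂ) := by
    intro h
    exact hξ0 (Complex.ext him (hLreal ξp h))
  -- integrality
  have haevS : (aeval sC) ((X^2 - C ((d:ℚ))) : ℚ[X]) = 0 := by
    simp only [map_sub, map_pow, aeval_X, aeval_C, halg]
    rw [hs2]
    push_cast
    ring
  have hintS : IsIntegral ℚ sC := ⟨_, monic_X_pow_sub_C _ two_ne_zero, haevS⟩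
  set f : ℚ[X] := X^4 - C (2*p) * X^2 + C (p^2 - q^2*d) with hfdef
  have hfm : f.Monic := by rw [hfdef]; monicity!
  have hfdeg : f.natDegree = 4 := by rw [hfdef]; compute_degree!
  have hf0 : (aeval ξp) f = 0 := by
    rw [hfdef]
    simp only [map_add, map_sub, map_mul, map_pow, aeval_X, aeval_C, halg]
    push_cast
    linear_combination (ξp^2 - (p:ℂ) + (q:ℂ)*sC) * hξp + (q:ℂ)^2 * hs2
  have hintξ : IsIntegral ℚ ξp := ⟨f, hfm, hf0⟩
  -- finrank of ℚ⟮sC⟯ is 2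
  have hminS : (minpoly ℚ sC).natDegree = 2 := by
    have hg0 : (X^2 - C ((d:ℚ)) : ℚ[X]) ≠ 0 :=
      (monic_X_pow_sub_C _ two_ne_zero).ne_zero
    have hdvd : minpoly ℚ sC ∣ X^2 - C ((d:ℚ)) := by
      apply minpoly.dvd
      simp only [map_sub, map_pow, aeval_X, aeval_C, halg]
      rw [hs2]; push_cast; ring
    have hle : (minpoly ℚ sC).natDegree ≤ 2 := by
      have := natDegree_le_of_dvd hdvd hg0
      rwa [natDegree_X_pow_sub_C] at this
    have hpos : 0 < (minpoly ℚ sC).natDegree := minpoly.natDegree_pos hintS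
    have hne1 : (minpoly ℚ sC).natDegree ≠ 1 := by
      intro h1
      have hdeg1 : (minpoly ℚ sC).degree = 1 := by
        rw [degree_eq_natDegree (minpoly.ne_zero hintS), h1]; rfl
      obtain ⟨a, ha⟩ := minpoly.degree_eq_one_iff.1 hdeg1
      apply hsnot a
      have h2 : ((a:ℝ):ℂ) = sC := by rw [← ha, halg]; push_cast; ring
      rw [hsCdef] at h2
      exact_mod_cast h2
    omega
  have hfinS : Module.finrank ℚ (ℚ⟮sC⟯ : IntermediateField ℚ ℂ) = 2 := by
    rw [adjoin.finrank hintS, hminS]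
  -- finrank of ℚ⟮sC⟯⟮ξp⟯ over ℚ⟮sC⟯ is 2
  have hcmem : (p:ℂ) + (q:ℂ) * sC ∈ (ℚ⟮sC⟯ : IntermediateField ℚ ℂ) :=
    add_mem (IntermediateField.algebraMap_mem _ p)
      (mul_mem (IntermediateField.algebraMap_mem _ q) (mem_adjoin_simple_self ℚ sC))
  have haevL : (aeval ξp) ((X^2 - C (⟨(p:ℂ) + (q:ℂ) * sC, hcmem⟩ :
      (ℚ⟮sC⟯ : IntermediateField ℚ ℂ))) : (ℚ⟮sC⟯ : IntermediateField ℚ ℂ)[X]) = 0 := by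
    rw [map_sub, map_pow, aeval_X, aeval_C]
    rw [show (algebraMap (ℚ⟮sC⟯ : IntermediateField ℚ ℂ) ℂ)
      (⟨(p:ℂ) + (q:ℂ) * sC, hcmem⟩ : (ℚ⟮sC⟯ : IntermediateField ℚ ℂ)) = (p:ℂ) + (q:ℂ) * sC
      from rfl, hξp]
    ring
  have hintξL : IsIntegral (ℚ⟮sC⟯ : IntermediateField ℚ ℂ) ξp :=
    ⟨_, monic_X_pow_sub_C _ two_ne_zero, haevL⟩
  have hminξL : (minpoly (ℚ⟮sC⟯ : IntermediateField ℚ ℂ) ξp).natDegree = 2 := by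
    have hg0 : ((X^2 - C (⟨(p:ℂ) + (q:ℂ) * sC, hcmem⟩ :
        (ℚ⟮sC⟯ : IntermediateField ℚ ℂ))) : (ℚ⟮sC⟯ : IntermediateField ℚ ℂ)[X]) ≠ 0 :=
      (monic_X_pow_sub_C _ two_ne_zero).ne_zero
    have hdvd := minpoly.dvd (ℚ⟮sC⟯ : IntermediateField ℚ ℂ) ξp haevL
    have hle : (minpoly (ℚ⟮sC⟯ : IntermediateField ℚ ℂ) ξp).natDegree ≤ 2 := by
      have := natDegree_le_of_dvd hdvd hg0
      rwa [natDegree_X_pow_sub_C] at this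
    have hpos : 0 < (minpoly (ℚ⟮sC⟯ : IntermediateField ℚ ℂ) ξp).natDegree :=
      minpoly.natDegree_pos hintξL
    have hne1 : (minpoly (ℚ⟮sC⟯ : IntermediateField ℚ ℂ) ξp).natDegree ≠ 1 := by
      intro h1
      have hdeg1 : (minpoly (ℚ⟮sC⟯ : IntermediateField ℚ ℂ) ξp).degree = 1 := by
        rw [degree_eq_natDegree (minpoly.ne_zero hintξL), h1]; rfl
      obtain ⟨a, ha⟩ := minpoly.degree_eq_one_iff.1 hdeg1
      exact hξnL (ha ▸ a.2)
    omega
  -- finrank of K over ℚ is 4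
  have hres : ((ℚ⟮sC⟯ : IntermediateField ℚ ℂ)⟮ξp⟯).restrictScalars ℚ = ℚ⟮sC, ξp⟯ :=
    adjoin_simple_adjoin_simple ℚ sC ξp
  have hfinK : Module.finrank ℚ (ℚ⟮sC, ξp⟯ : IntermediateField ℚ ℂ) = 4 := by
    rw [← hres]
    have h1 : Module.finrank ℚ ((ℚ⟮sC⟯ : IntermediateField ℚ ℂ)⟮ξp⟯) = 4 := by
      have := Module.finrank_mul_finrank ℚ (ℚ⟮sC⟯ : IntermediateField ℚ ℂ)
        ((ℚ⟮sC⟯ : IntermediateField ℚ ℂ)⟮ξp⟯)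
      rw [hfinS, adjoin.finrank hintξL, hminξL] at this
      omega
    exact h1
  -- minpoly of ξp over ℚ equals f
  have hmin : minpoly ℚ ξp = f := by
    have hdvd := minpoly.dvd ℚ ξp hf0
    have hnd : (minpoly ℚ ξp).natDegree = 4 := by
      rw [← adjoin.finrank hintξ, ← hK, hfinK]
    exact (eq_of_monic_of_dvd_of_natDegree_le (minpoly.monic hintξ) hfm hdvd
      (by rw [hfdeg, hnd])).symm
  -- the power basis of ℚ⟮ξp⟯
  haveI hFD : FiniteDimensional ℚ (ℚ⟮ξp⟯ : IntermediateField ℚ ℂ) :=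
    adjoin.finiteDimensional hintξ
  set pb := adjoin.powerBasis hintξ with hpbdef
  have hξmmem : ξm ∈ ℚ⟮ξp⟯ := by
    rw [hξmdef, div_eq_mul_inv]
    refine mul_mem (mul_mem hsmem' ?_) (inv_mem (mem_adjoin_simple_self ℚ ξp))
    rw [← halg r]
    exact IntermediateField.algebraMap_mem _ r
  set ym : (ℚ⟮ξp⟯ : IntermediateField ℚ ℂ) := ⟨ξm, hξmmem⟩ with hymdef
  have hfm0 : (aeval ξm) f = 0 := by
    rw [hfdef]
    simp only [map_add, map_sub, map_mul, map_pow, aeval_X, aeval_C, halg]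
    push_cast
    linear_combination (ξm^2 - (p:ℂ) - (q:ℂ)*sC) * hξm2 + (q:ℂ)^2 * hs2
  have hymf : (aeval ym) f = 0 := by
    have h := aeval_algHom_apply (IntermediateField.val ℚ⟮ξp⟯) ym f
    apply Subtype.ext
    show (((aeval ym) f : (ℚ⟮ξp⟯ : IntermediateField ℚ ℂ)) : ℂ) = (0 : ℂ)
    rw [show (((aeval ym) f : (ℚ⟮ξp⟯ : IntermediateField ℚ ℂ)) : ℂ)
      = (IntermediateField.val ℚ⟮ξp⟯) ((aeval ym) f) from rfl, ← h]
    rw [show (IntermediateField.val ℚ⟮ξp⟯) ym = ξm from rfl]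
    exact hfm0
  have hy : (aeval ym) (minpoly ℚ pb.gen) = 0 := by
    rw [hpbdef, adjoin.powerBasis_gen]
    rw [show minpoly ℚ (AdjoinSimple.gen ℚ ξp) = f from (minpoly_gen ℚ ξp).trans hmin]
    exact hymf
  set σA : (ℚ⟮ξp⟯ : IntermediateField ℚ ℂ) →ₐ[ℚ] (ℚ⟮ξp⟯ : IntermediateField ℚ ℂ) :=
    pb.lift ym hy with hσAdef
  have hσAgen : σA (AdjoinSimple.gen ℚ ξp) = ym := pb.lift_gen ym hy
  set σE : (ℚ⟮ξp⟯ : IntermediateField ℚ ℂ) ≃ₐ[ℚ] (ℚ⟮ξp⟯ : IntermediateField ℚ ℂ) :=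
    AlgEquiv.ofBijective σA σA.bijective with hσEdef
  set gK : (ℚ⟮ξp⟯ : IntermediateField ℚ ℂ) := AdjoinSimple.gen ℚ ξp with hgKdef
  have hσEgen : σE gK = ym := hσAgen
  have hgval : (gK : ℂ) = ξp := rfl
  set sE : (ℚ⟮ξp⟯ : IntermediateField ℚ ℂ) := ⟨sC, hsmem'⟩ with hsEdef
  -- σE sends sE to -sC
  have hrel1 : sE * (q : (ℚ⟮ξp⟯ : IntermediateField ℚ ℂ))
      = gK^2 - (p : (ℚ⟮ξp⟯ : IntermediateField ℚ ℂ)) := by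
    apply Subtype.ext
    push_cast
    rw [hgval]
    linear_combination -hξp
  have hrel1' : σE sE * (q : (ℚ⟮ξp⟯ : IntermediateField ℚ ℂ))
      = ym^2 - (p : (ℚ⟮ξp⟯ : IntermediateField ℚ ℂ)) := by
    have h := congrArg σE hrel1
    rw [map_mul, map_sub, map_pow, map_ratCast, map_ratCast, hσEgen] at h
    exact h
  have hσs : ((σE sE : (ℚ⟮ξp⟯ : IntermediateField ℚ ℂ)) : ℂ) = -sC := by
    have h3 := congrArg (fun z : (ℚ⟮ξp⟯ : IntermediateField ℚ ℂ) => (z : ℂ)) hrel1'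
    push_cast at h3
    try rw [show ((ym : (ℚ⟮ξp⟯ : IntermediateField ℚ ℂ)) : ℂ) = ξm from rfl] at h3
    have h4 : ((σE sE : (ℚ⟮ξp⟯ : IntermediateField ℚ ℂ)) : ℂ) * (q:ℂ) = -sC * (q:ℂ) := by
      linear_combination h3 + hξm2
    exact mul_right_cancel₀ hqC0 h4
  -- σE sends ym to -ξp
  have hrel2 : ym * gK = sE * (r : (ℚ⟮ξp⟯ : IntermediateField ℚ ℂ)) := by
    apply Subtype.ext
    push_cast
    exact hξmξp
  have hrel2' : σE ym * ym = σE sE * (r : (ℚ⟮ξp⟯ : IntermediateField ℚ ℂ)) := by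
    have h := congrArg σE hrel2
    rw [map_mul, map_mul, map_ratCast, hσEgen] at h
    exact h
  have hσym : ((σE ym : (ℚ⟮ξp⟯ : IntermediateField ℚ ℂ)) : ℂ) = -ξp := by
    have h3 := congrArg (fun z : (ℚ⟮ξp⟯ : IntermediateField ℚ ℂ) => (z : ℂ)) hrel2'
    push_cast at h3
    try rw [show ((ym : (ℚ⟮ξp⟯ : IntermediateField ℚ ℂ)) : ℂ) = ξm from rfl] at h3
    rw [hσs] at h3
    have h5 : ((σE ym : (ℚ⟮ξp⟯ : IntermediateField ℚ ℂ)) : ℂ) * ξm = (-ξp) * ξm := by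
      linear_combination h3 + hξmξp
    exact mul_right_cancel₀ hξm0 h5
  have hσσgen : ((σE (σE gK) : (ℚ⟮ξp⟯ : IntermediateField ℚ ℂ)) : ℂ) = -ξp := by
    rw [hσEgen]; exact hσym
  -- σE ∘ σE is complex conjugation
  have hconjAll : ∀ x : (ℚ⟮ξp⟯ : IntermediateField ℚ ℂ),
      ((σE (σE x) : (ℚ⟮ξp⟯ : IntermediateField ℚ ℂ)) : ℂ) = (starRingEnd ℂ) (x : ℂ) := by
    have heq : (IntermediateField.val ℚ⟮ξp⟯).comp ((σE.toAlgHom).comp σE.toAlgHom)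
        = ((Complex.conjAe.restrictScalars ℚ).toAlgHom).comp (IntermediateField.val ℚ⟮ξp⟯) := by
      apply pb.algHom_ext
      rw [hpbdef, adjoin.powerBasis_gen]
      show ((σE (σE gK) : (ℚ⟮ξp⟯ : IntermediateField ℚ ℂ)) : ℂ)
        = (Complex.conjAe.restrictScalars ℚ) ((gK : (ℚ⟮ξp⟯ : IntermediateField ℚ ℂ)) : ℂ)
      rw [hσσgen, hgval]
      show -ξp = (starRingEnd ℂ) ξp
      rw [hconjξ]
    intro x
    have h := DFunLike.congr_fun heq x
    exact h
  -- σE has order 4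
  have hpow4 : ∀ x : (ℚ⟮ξp⟯ : IntermediateField ℚ ℂ), (σE^4) x = σE (σE (σE (σE x))) := by
    intro x
    rw [pow_succ, pow_succ, pow_succ, pow_one, AlgEquiv.mul_apply, AlgEquiv.mul_apply,
      AlgEquiv.mul_apply]
  have hσ4 : σE^4 = 1 := by
    apply AlgEquiv.ext
    intro x
    rw [hpow4]
    apply Subtype.ext
    show ((σE (σE (σE (σE x))) : (ℚ⟮ξp⟯ : IntermediateField ℚ ℂ)) : ℂ) = (x : ℂ)
    rw [hconjAll (σE (σE x)), hconjAll x]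
    exact Complex.conj_conj _
  have hσ2ne : σE^2 ≠ 1 := by
    intro h
    have h1 : σE (σE gK) = gK := by
      have h2 := AlgEquiv.ext_iff.1 h gK
      rwa [pow_two, AlgEquiv.mul_apply] at h2
    have h2 : (-ξp : ℂ) = ξp := by
      rw [← hσσgen, h1, hgval]
    exact hξ0 (by linear_combination (-1/2 : ℂ) * h2)
  have hordE : orderOf σE = 4 := by
    have hdvd4 : orderOf σE ∣ 4 := orderOf_dvd_of_pow_eq_one hσ4
    have h1 : orderOf σE ≠ 1 := by
      intro h
      rw [orderOf_eq_one_iff] at h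
      exact hσ2ne (by rw [h, one_pow])
    have h2 : orderOf σE ≠ 2 := by
      intro h
      exact hσ2ne (h ▸ pow_orderOf_eq_one σE)
    have hdvd4' : orderOf σE ∣ 2^2 := by norm_num; exact hdvd4
    obtain ⟨k, hk2, hko⟩ := (Nat.dvd_prime_pow Nat.prime_two).1 hdvd4'
    interval_cases k
    · exact absurd (by simpa using hko) h1
    · exact absurd (by simpa using hko) h2
    · simpa using hko
  -- transport along hK
  obtain ⟨e, hedef⟩ : ∃ e' : (ℚ⟮sC, ξp⟯ : IntermediateField ℚ ℂ) ≃ₐ[ℚ]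
      (ℚ⟮ξp⟯ : IntermediateField ℚ ℂ), e' = equivOfEq hK := ⟨_, rfl⟩
  have hecoe : ∀ x : (ℚ⟮sC, ξp⟯ : IntermediateField ℚ ℂ),
      ((e x : (ℚ⟮ξp⟯ : IntermediateField ℚ ℂ)) : ℂ) = (x : ℂ) := fun x => by
    subst hedef; rfl
  have hescoe : ∀ y : (ℚ⟮ξp⟯ : IntermediateField ℚ ℂ),
      ((e.symm y : (ℚ⟮sC, ξp⟯ : IntermediateField ℚ ℂ)) : ℂ) = (y : ℂ) := fun y => by
    subst hedef; rfl
  refine ⟨(AlgEquiv.autCongr e.symm) σE, ?_, ?_, ?_⟩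
  · rw [← hordE]
    exact orderOf_injective (AlgEquiv.autCongr e.symm).toMonoidHom
      (AlgEquiv.autCongr e.symm).injective σE
  · have hx : e ⟨sC, hmem⟩ = sE := by
      apply Subtype.ext
      show ((e ⟨sC, hmem⟩ : (ℚ⟮ξp⟯ : IntermediateField ℚ ℂ)) : ℂ) = sC
      exact hecoe _
    simp only [AlgEquiv.autCongr_apply, AlgEquiv.trans_apply, AlgEquiv.symm_symm]
    rw [hescoe, hx, hσs]
  · intro x
    simp only [AlgEquiv.autCongr_apply, AlgEquiv.trans_apply, AlgEquiv.symm_symm]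
    rw [hescoe, AlgEquiv.apply_symm_apply]
    rw [hconjAll (e x), hecoe x]
end

section
/- Let d > 1 be a square-free positive integer, p < 0 and q ≠ 0 rationals with d' := p² − q²d > 0 not in d·(ℚ^×)² and not a square in ℚ. Set ξ₊ := √(p+q√d), ξ₋ := √(p−q√d) (purely imaginary, with ξ₊ξ₋ = −√d', √d' > 0). Then the normal closure of ℚ(√d, ξ₊) in ℂ is ℚ(√d, √d', ξ₊), which has degree 8 over ℚ. -/
open IntermediateField Polynomial Module
set_option maxHeartbeats 1000000
set_option synthInstance.maxHeartbeats 400000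

lemma aux_minpoly_quad {F E : Type*} [Field F] [Field E] [Algebra F E] {x : E} {a : F}
    (h : x ^ 2 = algebraMap F E a) (hx : x ∉ Set.range (algebraMap F E)) :
    minpoly F x = X ^ 2 - C a := by
  have hmono : (X ^ 2 - C a : F[X]).Monic := monic_X_pow_sub_C a two_ne_zero
  have haev : Polynomial.aeval x (X ^ 2 - C a : F[X]) = 0 := by simp [h]
  have hint : IsIntegral F x := ⟨X ^ 2 - C a, hmono, haev⟩
  have hdvd := minpoly.dvd F x haev
  refine (Polynomial.eq_of_monic_of_dvd_of_natDegree_le (minpoly.monic hint) hmono hdvd ?_).symm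
  rw [natDegree_X_pow_sub_C]
  exact (minpoly.two_le_natDegree_iff hint).mpr (by simpa [RingHom.mem_range] using hx)

lemma aux_finrank_quad {E : Type*} [Field E] {F : Type*} [Field F] [Algebra F E] {x : E} {a : F}
    (h : x ^ 2 = algebraMap F E a) (hx : x ∉ Set.range (algebraMap F E)) :
    finrank F F⟮x⟯ = 2 := by
  have hint : IsIntegral F x := ⟨X ^ 2 - C a, monic_X_pow_sub_C a two_ne_zero, by simp [h]⟩
  rw [IntermediateField.adjoin.finrank hint, aux_minpoly_quad h hx, natDegree_X_pow_sub_C]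

theorem stmt16 (d : ℕ) (hd : 1 < d) (hsf : Squarefree d) (p q : ℚ) (hp : p < 0) (hq : q ≠ 0)
    (hd' : 0 < p ^ 2 - q ^ 2 * d)
    (hnsq : ¬ ∃ r : ℚ, r ≠ 0 ∧ p ^ 2 - q ^ 2 * d = d * r ^ 2)
    (hnsq' : ¬ ∃ r : ℚ, p ^ 2 - q ^ 2 * d = r ^ 2)
    (sd sd' : ℂ)
    (hsd : sd = ((Real.sqrt d : ℝ) : ℂ))
    (hsd' : sd' = ((Real.sqrt ((p : ℝ) ^ 2 - (q : ℝ) ^ 2 * d) : ℝ) : ℂ))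
    (ξp ξm : ℂ)
    (hξp : ξp ^ 2 = (p : ℂ) + (q : ℂ) * sd)
    (hξm : ξm ^ 2 = (p : ℂ) - (q : ℂ) * sd)
    (himp : ξp.re = 0) (himm : ξm.re = 0)
    (hprod : ξp * ξm = -sd') :
    normalClosure ℚ (ℚ⟮sd, ξp⟯ : IntermediateField ℚ ℂ) ℂ =
      (ℚ⟮sd, sd', ξp⟯ : IntermediateField ℚ ℂ) ∧
    Module.finrank ℚ (ℚ⟮sd, sd', ξp⟯ : IntermediateField ℚ ℂ) = 8 := by
  set D : ℚ := p ^ 2 - q ^ 2 * d with hD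
  -- basic real/complex facts
  have hd0 : (0:ℝ) ≤ (d:ℝ) := by positivity
  have hsdsq : sd ^ 2 = ((d:ℚ) : ℂ) := by
    rw [hsd, ← Complex.ofReal_pow, Real.sq_sqrt hd0]; push_cast; ring
  have hDC : ((D:ℚ):ℂ) = (p:ℂ)^2 - (q:ℂ)^2*(d:ℂ) := by rw [hD]; push_cast; ring
  have hsdsqn : sd ^ 2 = (d : ℂ) := by rw [hsdsq]; norm_cast
  have hDR : ((D:ℚ):ℝ) = (p : ℝ) ^ 2 - (q : ℝ) ^ 2 * d := by rw [hD]; push_cast; ring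
  have hDRpos : (0:ℝ) < ((D:ℚ):ℝ) := by exact_mod_cast hd'
  have hsd'sq : sd' ^ 2 = ((D:ℚ) : ℂ) := by
    rw [hsd', ← Complex.ofReal_pow, Real.sq_sqrt (by rw [← hDR] at *; linarith)]
    norm_cast
  have hsd'im : sd'.im = 0 := by rw [hsd']; simp
  have hsdim : sd.im = 0 := by rw [hsd]; simp
  have hsd'0 : sd' ≠ 0 := by
    rw [hsd']
    exact_mod_cast (Real.sqrt_pos.mpr (hDR ▸ hDRpos)).ne'
  -- irrationality of sqrt d
  have hdnsq : ¬ IsSquare d := by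
    rintro ⟨r, hr⟩
    have hu : r = 1 := Nat.isUnit_iff.mp (hsf r (by rw [hr]))
    rw [hu] at hr
    omega
  have hirr : Irrational (Real.sqrt d) := irrational_sqrt_natCast_iff.mpr hdnsq
  have hsdrat : ∀ r : ℚ, sd ≠ (r : ℂ) := by
    intro r hr
    rw [hsd] at hr
    exact hirr ⟨r, by exact_mod_cast hr.symm⟩
  have hξp0 : ξp ≠ 0 := by
    intro h0
    rw [h0] at hξp
    apply hsdrat (-p/q)
    have : (q:ℂ) ≠ 0 := by exact_mod_cast hq
    rw [Rat.cast_div, Rat.cast_neg, eq_div_iff this]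
    linear_combination -hξp
  have hξm0 : ξm ≠ 0 := by
    intro h0
    rw [h0] at hξm
    apply hsdrat (p/q)
    have : (q:ℂ) ≠ 0 := by exact_mod_cast hq
    rw [Rat.cast_div, eq_div_iff this]
    linear_combination hξm
  have hξpim : ξp.im ≠ 0 := fun h => hξp0 (Complex.ext himp h)
  -- the real subfield
  set RS : Subfield ℂ := Complex.ofRealHom.fieldRange with hRS
  have hRSmem : ∀ z : ℂ, z ∈ RS ↔ z.im = 0 := by
    intro z
    constructor
    · rintro ⟨r, rfl⟩; simp [hRS]
    · intro h; exact ⟨z.re, by apply Complex.ext <;> simp [h]⟩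
  have hsdRS : sd ∈ RS := (hRSmem sd).mpr hsdim
  have hsd'RS : sd' ∈ RS := (hRSmem sd').mpr hsd'im
  have hQRS : ∀ x : ℚ, algebraMap ℚ ℂ x ∈ RS := fun x => (hRSmem _).mpr (by simp)
  set RQ : IntermediateField ℚ ℂ := RS.toIntermediateField hQRS with hRQ
  have hF1real : ∀ z ∈ (ℚ⟮sd⟯ : IntermediateField ℚ ℂ), z.im = 0 := by
    intro z hz
    have hle : (ℚ⟮sd⟯ : IntermediateField ℚ ℂ) ≤ RQ := adjoin_simple_le_iff.mpr hsdRS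
    exact (hRSmem z).mp (hle hz)
  have hξpF1 : ξp ∉ (ℚ⟮sd⟯ : IntermediateField ℚ ℂ) := fun h => hξpim (hF1real ξp h)
  -- every element of ℚ⟮sd⟯ is a + b √d
  have hint_sd : IsIntegral ℚ sd :=
    ⟨X^2 - C (d:ℚ), monic_X_pow_sub_C _ two_ne_zero, by simp [hsdsq]⟩
  have hF1form : ∀ z ∈ (ℚ⟮sd⟯ : IntermediateField ℚ ℂ), ∃ a b : ℚ, z = (a:ℂ) + (b:ℂ) * sd := by
    intro z hz
    have hz' : z ∈ Algebra.adjoin ℚ ({sd} : Set ℂ) := by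
      have := adjoin_simple_toSubalgebra_of_isAlgebraic hint_sd.isAlgebraic
      rw [← this]
      exact hz
    clear hz
    induction hz' using Algebra.adjoin_induction with
    | mem x hx =>
      exact ⟨0, 1, by rw [Set.mem_singleton_iff.mp hx]; push_cast; ring⟩
    | algebraMap r => exact ⟨r, 0, by push_cast; simp⟩
    | add x y hx hy ihx ihy =>
      obtain ⟨a, b, rfl⟩ := ihx
      obtain ⟨a', b', rfl⟩ := ihy
      exact ⟨a + a', b + b', by push_cast; ring⟩
    | mul x y hx hy ihx ihy =>
      obtain ⟨a, b, rfl⟩ := ihx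
      obtain ⟨a', b', rfl⟩ := ihy
      refine ⟨a*a' + b*b'*d, a*b' + a'*b, by push_cast; linear_combination ((b:ℂ)*(b':ℂ)) * hsdsqn⟩
  -- sd' is not in ℚ⟮sd⟯
  have hsd'F1 : sd' ∉ (ℚ⟮sd⟯ : IntermediateField ℚ ℂ) := by
    intro hmem
    obtain ⟨a, b, hab⟩ := hF1form sd' hmem
    have heq : ((2*a*b : ℚ):ℂ) * sd = ((D - a^2 - b^2*d : ℚ):ℂ) := by
      push_cast
      linear_combination hsd'sq - (sd' + (a:ℂ) + (b:ℂ)*sd) * hab - (b:ℂ)^2 * hsdsqn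
    by_cases hab0 : a * b = 0
    · rcases mul_eq_zero.mp hab0 with h | h
      · -- a = 0
        subst h
        apply hnsq
        refine ⟨b, fun hb0 => hsd'0 (by rw [hab, hb0]; simp), ?_⟩
        have hc : ((D:ℚ):ℂ) = (((d:ℚ) * b^2 : ℚ):ℂ) := by
          push_cast
          linear_combination (sd' + (b:ℂ)*sd) * hab + (b:ℂ)^2 * hsdsqn - hsd'sq
        exact_mod_cast hc
      · -- b = 0
        subst h
        apply hnsq'
        refine ⟨a, ?_⟩
        have hc : ((D:ℚ):ℂ) = ((a^2 : ℚ):ℂ) := by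
          push_cast
          linear_combination (sd' + (a:ℂ)) * hab - hsd'sq
        exact_mod_cast hc
    · apply hsdrat ((D - a^2 - b^2*d)/(2*a*b))
      have h2ab : ((2*a*b : ℚ):ℂ) ≠ 0 := by
        exact_mod_cast (by intro h; apply hab0; linarith : (2*a*b:ℚ) ≠ 0)
      rw [Rat.cast_div, eq_div_iff (by exact_mod_cast h2ab)]
      push_cast at heq ⊢
      linear_combination heq
  -- rationals belong to every intermediate field
  have hratmem : ∀ (r : ℚ) (S : IntermediateField ℚ ℂ), (r:ℂ) ∈ S := fun r S => by
    have := S.algebraMap_mem r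
    rwa [eq_ratCast] at this
  -- finrank ℚ ℚ⟮sd⟯ = 2
  have hsdnr : sd ∉ Set.range (algebraMap ℚ ℂ) := by
    rintro ⟨r, hr⟩
    exact hsdrat r (by rw [← hr, eq_ratCast])
  have hfr1 : finrank ℚ (ℚ⟮sd⟯ : IntermediateField ℚ ℂ) = 2 :=
    aux_finrank_quad (a := ((d:ℚ))) (by rw [hsdsq, eq_ratCast]) hsdnr
  -- finrank ℚ⟮sd⟯ ℚ⟮sd⟯⟮ξp⟯ = 2
  have hgenmem : (p:ℂ) + (q:ℂ)*sd ∈ (ℚ⟮sd⟯ : IntermediateField ℚ ℂ) :=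
    add_mem (hratmem p _) (mul_mem (hratmem q _) (mem_adjoin_simple_self ℚ sd))
  have hξpalg : ξp ^ 2 = algebraMap (ℚ⟮sd⟯ : IntermediateField ℚ ℂ) ℂ ⟨_, hgenmem⟩ := hξp
  have hξpnr : ξp ∉ Set.range (algebraMap (ℚ⟮sd⟯ : IntermediateField ℚ ℂ) ℂ) := by
    rintro ⟨w, hw⟩
    exact hξpF1 (hw ▸ w.2)
  have hfr2 : finrank (ℚ⟮sd⟯ : IntermediateField ℚ ℂ) (ℚ⟮sd⟯⟮ξp⟯) = 2 :=
    aux_finrank_quad hξpalg hξpnr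
  have hintξp' : IsIntegral (ℚ⟮sd⟯ : IntermediateField ℚ ℂ) ξp :=
    ⟨X^2 - C (⟨_, hgenmem⟩ : (ℚ⟮sd⟯ : IntermediateField ℚ ℂ)), monic_X_pow_sub_C _ two_ne_zero,
      by simp [hξpalg]⟩
  haveI : FiniteDimensional (ℚ⟮sd⟯ : IntermediateField ℚ ℂ) ℚ⟮sd⟯⟮ξp⟯ :=
    IntermediateField.adjoin.finiteDimensional hintξp'
  haveI : FiniteDimensional ℚ (ℚ⟮sd⟯ : IntermediateField ℚ ℂ) :=
    IntermediateField.adjoin.finiteDimensional hint_sd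
  have hKeq : ((ℚ⟮sd⟯⟮ξp⟯).restrictScalars ℚ) = (ℚ⟮sd, ξp⟯ : IntermediateField ℚ ℂ) :=
    adjoin_simple_adjoin_simple ℚ sd ξp
  have hK4 : finrank ℚ (ℚ⟮sd, ξp⟯ : IntermediateField ℚ ℂ) = 4 := by
    rw [← hKeq]
    have h := Module.finrank_mul_finrank ℚ (ℚ⟮sd⟯ : IntermediateField ℚ ℂ) ℚ⟮sd⟯⟮ξp⟯
    rw [hfr1, hfr2] at h
    calc finrank ℚ ((ℚ⟮sd⟯⟮ξp⟯).restrictScalars ℚ) = finrank ℚ ℚ⟮sd⟯⟮ξp⟯ := rfl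
      _ = 2 * 2 := h.symm
      _ = 4 := rfl
  -- sd' not in ℚ⟮sd⟯⟮ξp⟯
  have hsd'nrF1 : sd' ∉ Set.range (algebraMap (ℚ⟮sd⟯ : IntermediateField ℚ ℂ) ℂ) := by
    rintro ⟨w, hw⟩
    exact hsd'F1 (hw ▸ w.2)
  have hsd'K' : sd' ∉ (ℚ⟮sd⟯⟮ξp⟯ : IntermediateField (ℚ⟮sd⟯ : IntermediateField ℚ ℂ) ℂ) := by
    intro hmem
    have hle : (ℚ⟮sd⟯⟮sd'⟯ : IntermediateField (ℚ⟮sd⟯ : IntermediateField ℚ ℂ) ℂ) ≤ ℚ⟮sd⟯⟮ξp⟯ :=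
      adjoin_simple_le_iff.mpr hmem
    have hsd'alg : sd' ^ 2 = algebraMap (ℚ⟮sd⟯ : IntermediateField ℚ ℂ) ℂ ⟨_, hratmem D _⟩ := hsd'sq
    have hfr3 : finrank (ℚ⟮sd⟯ : IntermediateField ℚ ℂ) ℚ⟮sd⟯⟮sd'⟯ = 2 :=
      aux_finrank_quad hsd'alg hsd'nrF1
    have heq2 : (ℚ⟮sd⟯⟮sd'⟯ : IntermediateField (ℚ⟮sd⟯ : IntermediateField ℚ ℂ) ℂ) = ℚ⟮sd⟯⟮ξp⟯ :=
      IntermediateField.eq_of_le_of_finrank_eq hle (by rw [hfr3, hfr2])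
    have hξpmem : ξp ∈ (ℚ⟮sd⟯⟮sd'⟯ : IntermediateField (ℚ⟮sd⟯ : IntermediateField ℚ ℂ) ℂ) :=
      heq2 ▸ mem_adjoin_simple_self _ ξp
    have hQ2 : ∀ x : (ℚ⟮sd⟯ : IntermediateField ℚ ℂ), algebraMap _ ℂ x ∈ RS :=
      fun x => (hRSmem _).mpr (hF1real x x.2)
    have hle2 : (ℚ⟮sd⟯⟮sd'⟯ : IntermediateField (ℚ⟮sd⟯ : IntermediateField ℚ ℂ) ℂ) ≤
        RS.toIntermediateField hQ2 := adjoin_simple_le_iff.mpr hsd'RS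
    exact hξpim ((hRSmem ξp).mp (hle2 hξpmem))
  -- L = adjoin over K of sd', and finrank = 8
  have hLsets : (ℚ⟮sd, sd', ξp⟯ : IntermediateField ℚ ℂ) =
      IntermediateField.adjoin ℚ (({sd, ξp} : Set ℂ) ∪ {sd'}) := by
    apply congrArg
    ext z
    simp only [Set.mem_insert_iff, Set.mem_singleton_iff, Set.mem_union]
    tauto
  have hLeq : (((ℚ⟮sd, ξp⟯ : IntermediateField ℚ ℂ)⟮sd'⟯).restrictScalars ℚ) =
      (ℚ⟮sd, sd', ξp⟯ : IntermediateField ℚ ℂ) := by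
    rw [hLsets]
    exact adjoin_adjoin_left ℚ {sd, ξp} {sd'}
  have hsd'nrK : sd' ∉ Set.range (algebraMap (ℚ⟮sd, ξp⟯ : IntermediateField ℚ ℂ) ℂ) := by
    rintro ⟨w, hw⟩
    apply hsd'K'
    rw [← IntermediateField.mem_restrictScalars (K := ℚ), hKeq]
    exact hw ▸ w.2
  have hsd'algK : sd' ^ 2 =
      algebraMap (ℚ⟮sd, ξp⟯ : IntermediateField ℚ ℂ) ℂ ⟨_, hratmem D _⟩ := hsd'sq
  have hfr4 : finrank (ℚ⟮sd, ξp⟯ : IntermediateField ℚ ℂ)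
      ((ℚ⟮sd, ξp⟯ : IntermediateField ℚ ℂ)⟮sd'⟯) = 2 := aux_finrank_quad hsd'algK hsd'nrK
  have hL8 : finrank ℚ (ℚ⟮sd, sd', ξp⟯ : IntermediateField ℚ ℂ) = 8 := by
    rw [← hLeq]
    have h := Module.finrank_mul_finrank ℚ (ℚ⟮sd, ξp⟯ : IntermediateField ℚ ℂ)
      ((ℚ⟮sd, ξp⟯ : IntermediateField ℚ ℂ)⟮sd'⟯)
    rw [hK4, hfr4] at h
    calc finrank ℚ ((((ℚ⟮sd, ξp⟯ : IntermediateField ℚ ℂ))⟮sd'⟯).restrictScalars ℚ)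
        = finrank ℚ (((ℚ⟮sd, ξp⟯ : IntermediateField ℚ ℂ))⟮sd'⟯) := rfl
      _ = 4 * 2 := h.symm
      _ = 8 := rfl
  -- K = ℚ⟮ξp⟯
  have hqC : (q:ℂ) ≠ 0 := by exact_mod_cast hq
  have hKsimple : (ℚ⟮sd, ξp⟯ : IntermediateField ℚ ℂ) = ℚ⟮ξp⟯ := by
    apply le_antisymm
    · rw [adjoin_le_iff]
      rintro z hz
      simp only [Set.mem_insert_iff, Set.mem_singleton_iff] at hz
      rcases hz with hz | hz <;> rw [hz]
      · have hsdval : sd = ((q:ℂ))⁻¹ * (ξp^2 - (p:ℂ)) := by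
          field_simp
          linear_combination -hξp
        rw [hsdval]
        exact mul_mem (inv_mem (hratmem q _))
          (sub_mem (pow_mem (mem_adjoin_simple_self ℚ ξp) 2) (hratmem p _))
      · exact mem_adjoin_simple_self ℚ ξp
    · apply IntermediateField.adjoin.mono
      simp
  -- the quartic minimal polynomial
  set P : Polynomial ℚ := X^4 - C (2*p) * X^2 + C D with hPdef
  have hPmonic : P.Monic := by rw [hPdef]; monicity!
  have hPdeg : P.natDegree = 4 := by rw [hPdef]; compute_degree!
  have haevP : Polynomial.aeval ξp P = 0 := by
    rw [hPdef]
    simp only [map_add, map_sub, map_mul, map_pow, aeval_X, aeval_C, eq_ratCast]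
    push_cast
    linear_combination (ξp^2 + (q:ℂ)*sd - (p:ℂ)) * hξp + (q:ℂ)^2 * hsdsqn + hDC
  have haevPm : Polynomial.aeval ξm P = 0 := by
    rw [hPdef]
    simp only [map_add, map_sub, map_mul, map_pow, aeval_X, aeval_C, eq_ratCast]
    push_cast
    linear_combination (ξm^2 - (q:ℂ)*sd - (p:ℂ)) * hξm + (q:ℂ)^2 * hsdsqn + hDC
  have hintξp : IsIntegral ℚ ξp := ⟨P, hPmonic, haevP⟩
  have hfrξp : finrank ℚ (ℚ⟮ξp⟯ : IntermediateField ℚ ℂ) = 4 := by rw [← hKsimple]; exact hK4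
  have hminP : minpoly ℚ ξp = P := by
    refine (Polynomial.eq_of_monic_of_dvd_of_natDegree_le (minpoly.monic hintξp) hPmonic
      (minpoly.dvd ℚ ξp haevP) ?_).symm
    rw [hPdeg, ← IntermediateField.adjoin.finrank hintξp, hfrξp]
  -- members of L
  have hsdL : sd ∈ (ℚ⟮sd, sd', ξp⟯ : IntermediateField ℚ ℂ) := subset_adjoin _ _ (by simp)
  have hsd'L : sd' ∈ (ℚ⟮sd, sd', ξp⟯ : IntermediateField ℚ ℂ) := subset_adjoin _ _ (by simp)
  have hξpL : ξp ∈ (ℚ⟮sd, sd', ξp⟯ : IntermediateField ℚ ℂ) := subset_adjoin _ _ (by simp)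
  have hξmval : ξm = -sd' / ξp := by
    rw [eq_div_iff hξp0]
    linear_combination hprod
  have hξmL : ξm ∈ (ℚ⟮sd, sd', ξp⟯ : IntermediateField ℚ ℂ) := by
    rw [hξmval]
    exact div_mem (neg_mem hsd'L) hξpL
  -- L ≤ normal closure
  haveI hFDK : FiniteDimensional ℚ (ℚ⟮sd, ξp⟯ : IntermediateField ℚ ℂ) := by
    rw [hKsimple]
    exact IntermediateField.adjoin.finiteDimensional hintξp
  have hξpK : ξp ∈ (ℚ⟮sd, ξp⟯ : IntermediateField ℚ ℂ) := subset_adjoin _ _ (by simp)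
  have hsdK : sd ∈ (ℚ⟮sd, ξp⟯ : IntermediateField ℚ ℂ) := subset_adjoin _ _ (by simp)
  obtain ⟨φ, hφ⟩ := IntermediateField.exists_algHom_of_splits_of_aeval
      (F := ℚ) (E := (ℚ⟮sd, ξp⟯ : IntermediateField ℚ ℂ)) (K := ℂ)
      (fun s => ⟨IsIntegral.of_finite ℚ s, IsAlgClosed.splits _⟩)
      (x := ⟨ξp, hξpK⟩) (y := ξm)
      (by convert haevPm using 2; exact (IntermediateField.minpoly_eq _).trans hminP)
  have hξmN : ξm ∈ normalClosure ℚ (ℚ⟮sd, ξp⟯ : IntermediateField ℚ ℂ) ℂ := by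
    rw [← hφ]
    exact φ.fieldRange_le_normalClosure ⟨_, rfl⟩
  have hKN := IntermediateField.le_normalClosure (ℚ⟮sd, ξp⟯ : IntermediateField ℚ ℂ)
  have hLN : (ℚ⟮sd, sd', ξp⟯ : IntermediateField ℚ ℂ) ≤
      normalClosure ℚ (ℚ⟮sd, ξp⟯ : IntermediateField ℚ ℂ) ℂ := by
    rw [adjoin_le_iff]
    rintro z hz
    simp only [Set.mem_insert_iff, Set.mem_singleton_iff] at hz
    rcases hz with hz | hz | hz <;> rw [hz]
    · exact hKN hsdK
    · have hv : sd' = -(ξp * ξm) := by linear_combination hprod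
      rw [hv]
      exact neg_mem (mul_mem (hKN hξpK) hξmN)
    · exact hKN hξpK
  -- L is normal: splitting field of g
  set g : Polynomial ℚ := (X^2 - C (d:ℚ)) * ((X^2 - C D) * P) with hg
  have hgmonic : g.Monic := (monic_X_pow_sub_C _ two_ne_zero).mul
    ((monic_X_pow_sub_C _ two_ne_zero).mul hPmonic)
  have hg0 : g ≠ 0 := hgmonic.ne_zero
  have hgsplits : (g.map (algebraMap ℚ ℂ)).Splits := IsAlgClosed.splits _
  have hLadj : (ℚ⟮sd, sd', ξp⟯ : IntermediateField ℚ ℂ) = adjoin ℚ (g.rootSet ℂ) := by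
    apply le_antisymm
    · rw [adjoin_le_iff]
      rintro z hz
      simp only [Set.mem_insert_iff, Set.mem_singleton_iff] at hz
      have hmem : ∀ w : ℂ, Polynomial.aeval w g = 0 → w ∈ g.rootSet ℂ := fun w hw =>
        Polynomial.mem_rootSet.mpr ⟨hg0, hw⟩
      rcases hz with hz | hz | hz <;> rw [hz]
      · refine subset_adjoin _ _ (hmem sd ?_)
        rw [hg]
        simp only [map_mul, map_add, map_sub, map_pow, aeval_X, aeval_C, eq_ratCast]
        rw [show ((d:ℚ):ℂ) = (d:ℂ) by push_cast; ring]
        rw [← hsdsqn]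
        ring
      · refine subset_adjoin _ _ (hmem sd' ?_)
        rw [hg]
        simp only [map_mul, map_add, map_sub, map_pow, aeval_X, aeval_C, eq_ratCast]
        rw [← hsd'sq]
        ring
      · refine subset_adjoin _ _ (hmem ξp ?_)
        rw [hg]
        simp only [map_mul]
        rw [haevP]
        ring
    · rw [adjoin_le_iff]
      rintro y hy
      have hy2 : Polynomial.aeval y g = 0 := (Polynomial.mem_rootSet.mp hy).2
      rw [hg] at hy2
      simp only [map_mul, map_add, map_sub, map_pow, aeval_X, aeval_C, eq_ratCast] at hy2
      rcases mul_eq_zero.mp hy2 with h1 | h23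
      · have hf : (y - sd) * (y + sd) = 0 := by
          rw [show ((d:ℚ):ℂ) = (d:ℂ) by push_cast; ring] at h1
          linear_combination h1 - hsdsqn
        rcases mul_eq_zero.mp hf with h | h
        · rw [sub_eq_zero.mp h]; exact hsdL
        · rw [eq_neg_of_add_eq_zero_left h]; exact neg_mem hsdL
      rcases mul_eq_zero.mp h23 with h2 | h3
      · have hf : (y - sd') * (y + sd') = 0 := by
          linear_combination h2 - hsd'sq
        rcases mul_eq_zero.mp hf with h | h
        · rw [sub_eq_zero.mp h]; exact hsd'L
        · rw [eq_neg_of_add_eq_zero_left h]; exact neg_mem hsd'L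
      · rw [hPdef] at h3
        simp only [map_add, map_sub, map_mul, map_pow, aeval_X, aeval_C, eq_ratCast] at h3
        push_cast at h3
        have hf2 : (y^2 - ξp^2) * (y^2 - ξm^2) = 0 := by
          rw [hξp, hξm]
          push_cast
          linear_combination h3 - (q:ℂ)^2 * hsdsqn - hDC
        rcases mul_eq_zero.mp hf2 with hq2 | hq2
        · have hf : (y - ξp) * (y + ξp) = 0 := by linear_combination hq2
          rcases mul_eq_zero.mp hf with h | h
          · rw [sub_eq_zero.mp h]; exact hξpL
          · rw [eq_neg_of_add_eq_zero_left h]; exact neg_mem hξpL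
        · have hf : (y - ξm) * (y + ξm) = 0 := by linear_combination hq2
          rcases mul_eq_zero.mp hf with h | h
          · rw [sub_eq_zero.mp h]; exact hξmL
          · rw [eq_neg_of_add_eq_zero_left h]; exact neg_mem hξmL
  have hnormalL : Normal ℚ (ℚ⟮sd, sd', ξp⟯ : IntermediateField ℚ ℂ) := by
    rw [hLadj]
    haveI := IntermediateField.adjoin_rootSet_isSplittingField hgsplits
    exact Normal.of_isSplittingField (F := ℚ) (E := ↥(adjoin ℚ (g.rootSet ℂ))) g
      (hFEp := IntermediateField.adjoin_rootSet_isSplittingField hgsplits)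
  haveI := hnormalL
  have hKLle : (ℚ⟮sd, ξp⟯ : IntermediateField ℚ ℂ) ≤ ℚ⟮sd, sd', ξp⟯ := by
    apply IntermediateField.adjoin.mono
    intro z hz
    simp only [Set.mem_insert_iff, Set.mem_singleton_iff] at hz ⊢
    tauto
  haveI : Algebra.IsAlgebraic ℚ (ℚ⟮sd, ξp⟯ : IntermediateField ℚ ℂ) :=
    Algebra.IsAlgebraic.of_finite _ _
  have hNle : normalClosure ℚ (ℚ⟮sd, ξp⟯ : IntermediateField ℚ ℂ) ℂ ≤ ℚ⟮sd, sd', ξp⟯ := by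
    refine le_trans Algebra.IsAlgebraic.normalClosure_le_iSup_adjoin (iSup_le fun x => ?_)
    rw [adjoin_le_iff]
    intro y hy
    have hx : (x : ℂ) ∈ (ℚ⟮sd, sd', ξp⟯ : IntermediateField ℚ ℂ) := hKLle x.2
    have hmml : minpoly ℚ x =
        minpoly ℚ (⟨(x : ℂ), hx⟩ : (ℚ⟮sd, sd', ξp⟯ : IntermediateField ℚ ℂ)) := by
      exact (IntermediateField.minpoly_eq x).trans
        (IntermediateField.minpoly_eq (⟨(x : ℂ), hx⟩ : (ℚ⟮sd, sd', ξp⟯ : IntermediateField ℚ ℂ))).symm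
    have hsplits := (normal_iff.mp hnormalL ⟨(x : ℂ), hx⟩).2
    rw [← hmml] at hsplits
    rw [← hsplits.image_rootSet (ℚ⟮sd, sd', ξp⟯ : IntermediateField ℚ ℂ).val] at hy
    obtain ⟨z, _, rfl⟩ := hy
    exact z.2
  exact ⟨le_antisymm hNle hLN, hL8⟩
end
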